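/- Let n, k ∈ ℕ with k < n, let H ⊆ ℝ with |H| ≥ n, and let ω = (ω₁, …, ω_n) : H → ℝⁿ be such that ω_{⟨k+1⟩} has nonvanishing determinants Φ_{ω_{⟨k+1⟩}} on pairwise distinct arguments. Then for pairwise distinct x₁, …, x_n ∈ H the following identity holds: Φ_ω(x₁, …, x_n) · (Φ_{ω_{⟨k⟩}}(x₁, …, x_k))^{n−k−1} / ∏_{j=k+1}^{n} Φ_{ω_{⟨k+1⟩}}(x₁, …, x_k, x_j) equals the determinant of the (n−k)×(n−k) matrix whose (i,j) entry (for i, j ∈ {k+1, …, n}) is [x₁, …, x_k, x_j; ω_i]_{ω_{⟨k+1⟩}}. -/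

import Mathlib

/-- `Φ_ω(x₁,…,x_m) = det(ω_i(x_j))`. -/
noncomputable def Phi {m : ℕ} (ω : Fin m → ℝ → ℝ) (x : Fin m → ℝ) : ℝ :=
  Matrix.det (Matrix.of fun i j => ω i (x j))

/-- `ω` is an `m`-dimensional positive Chebyshev system over `H`. -/
def IsPosChebyshev {m : ℕ} (ω : Fin m → ℝ → ℝ) (H : Set ℝ) : Prop :=
  ∀ x : Fin m → ℝ, (∀ i, x i ∈ H) → StrictMono x → 0 < Phi ω x

/-- `f` is convex with respect to the `m`-dimensional system `ω` on `S`. -/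
def IsConvexWRT {m : ℕ} (ω : Fin m → ℝ → ℝ) (S : Set ℝ) (f : ℝ → ℝ) : Prop :=
  ∀ x : Fin (m + 1) → ℝ, (∀ i, x i ∈ S) → StrictMono x → 0 ≤ Phi (Fin.snoc ω f) x

/-- The generalized divided difference `[x₁,…,x_k; f]_{ω⟨k⟩}`:
the numerator replaces the last function `ω_k` by `f`. -/
noncomputable def divDiff {k : ℕ} (ω : Fin k → ℝ → ℝ) (f : ℝ → ℝ) (x : Fin k → ℝ) : ℝ :=
  Phi (fun i => if (i : ℕ) + 1 = k then f else ω i) x / Phi ω x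

open Matrix

/-- The bordered matrix appearing in Sylvester's determinant identity. -/
def brd {R : Type*} [CommRing R] {k m : ℕ}
    (B : Matrix (Fin k ⊕ Fin m) (Fin k ⊕ Fin m) R) (i j : Fin m) :
    Matrix (Fin k ⊕ Fin 1) (Fin k ⊕ Fin 1) R :=
  Matrix.fromBlocks B.toBlocks₁₁ (Matrix.of fun s _ => B (Sum.inl s) (Sum.inr j))
    (Matrix.of fun _ t => B (Sum.inr i) (Sum.inl t))
    (Matrix.of fun _ _ => B (Sum.inr i) (Sum.inr j))

lemma toBlocks₁₁_map {R S : Type*} [CommRing R] [CommRing S] (f : R →+* S) {k m : ℕ}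
    (M : Matrix (Fin k ⊕ Fin m) (Fin k ⊕ Fin m) R) :
    (f.mapMatrix M).toBlocks₁₁ = f.mapMatrix M.toBlocks₁₁ := by
  ext s t; simp [Matrix.toBlocks₁₁]

lemma brd_map {R S : Type*} [CommRing R] [CommRing S] (f : R →+* S) {k m : ℕ}
    (M : Matrix (Fin k ⊕ Fin m) (Fin k ⊕ Fin m) R) (i j : Fin m) :
    brd (f.mapMatrix M) i j = f.mapMatrix (brd M i j) := by
  ext s t
  rcases s with s | s <;> rcases t with t | t <;>
    simp [brd, Matrix.fromBlocks, Matrix.toBlocks₁₁]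

lemma lhs_map {R S : Type*} [CommRing R] [CommRing S] (f : R →+* S) {k m : ℕ}
    (M : Matrix (Fin k ⊕ Fin m) (Fin k ⊕ Fin m) R) :
    (Matrix.of fun i j : Fin m => (brd (f.mapMatrix M) i j).det).det
      = f (Matrix.of fun i j : Fin m => (brd M i j).det).det := by
  rw [RingHom.map_det]
  congr 1
  ext i j
  simp only [Matrix.of_apply, RingHom.mapMatrix_apply, Matrix.map_apply,
    ← RingHom.mapMatrix_apply, brd_map, ← RingHom.map_det]
  rfl

lemma rhs_map {R S : Type*} [CommRing R] [CommRing S] (f : R →+* S) {k m : ℕ}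
    (M : Matrix (Fin k ⊕ Fin m) (Fin k ⊕ Fin m) R) :
    (f.mapMatrix M).det * (f.mapMatrix M).toBlocks₁₁.det ^ (m - 1)
      = f (M.det * M.toBlocks₁₁.det ^ (m - 1)) := by
  rw [_root_.map_mul, map_pow, RingHom.map_det, RingHom.map_det, toBlocks₁₁_map]

/-- Sylvester's determinant identity over a field, for a nonsingular corner block. -/
theorem sylv_field {F : Type*} [Field F] {k m : ℕ} (hm : 0 < m)
    (B : Matrix (Fin k ⊕ Fin m) (Fin k ⊕ Fin m) F) (hK : B.toBlocks₁₁.det ≠ 0) :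
    (Matrix.of fun i j : Fin m => (brd B i j).det).det
      = B.det * B.toBlocks₁₁.det ^ (m - 1) := by
  set K := B.toBlocks₁₁ with hKdef
  haveI : Invertible K := K.invertibleOfIsUnitDet (isUnit_iff_ne_zero.2 hK)
  set S : Matrix (Fin m) (Fin m) F := B.toBlocks₂₂ - B.toBlocks₂₁ * ⅟ K * B.toBlocks₁₂ with hS
  have hbrd : ∀ i j, (brd B i j).det = K.det * S i j := by
    intro i j
    rw [brd, det_fromBlocks₁₁]
    congr 1
    rw [det_fin_one]
    simp [hS, Matrix.mul_apply, Matrix.sub_apply, Matrix.toBlocks₂₂, Matrix.toBlocks₂₁,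
      Matrix.toBlocks₁₂, Finset.mul_sum, Finset.sum_mul, mul_assoc]
    rfl
  have h1 : (Matrix.of fun i j : Fin m => (brd B i j).det) = K.det • S := by
    ext i j; simp [hbrd i j]
  have hB : B.det = K.det * S.det := by
    conv_lhs => rw [← Matrix.fromBlocks_toBlocks B]
    rw [det_fromBlocks₁₁]
  rw [h1, Matrix.det_smul, hB]
  have hp : K.det ^ Fintype.card (Fin m) = K.det * K.det ^ (m - 1) := by
    rw [← pow_succ']
    congr 1
    simp [Fintype.card_fin]; omega
  rw [hp]; ring

/-- Sylvester's determinant identity over `ℝ`, no nonsingularity assumption. -/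
theorem sylv {k m : ℕ} (hm : 0 < m) (B : Matrix (Fin k ⊕ Fin m) (Fin k ⊕ Fin m) ℝ) :
    (Matrix.of fun i j : Fin m => (brd B i j).det).det
      = B.det * B.toBlocks₁₁.det ^ (m - 1) := by
  set φ : Polynomial ℝ →+* FractionRing (Polynomial ℝ) :=
    algebraMap (Polynomial ℝ) (FractionRing (Polynomial ℝ)) with hφ
  have hinj : Function.Injective φ :=
    IsFractionRing.injective (Polynomial ℝ) (FractionRing (Polynomial ℝ))
  set Bp : Matrix (Fin k ⊕ Fin m) (Fin k ⊕ Fin m) (Polynomial ℝ) :=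
    Matrix.of fun i j => Polynomial.C (B i j) + if i = j then Polynomial.X else 0 with hBp
  have hKp : Bp.toBlocks₁₁ = Matrix.charmatrix (-(Matrix.of fun s t : Fin k =>
      B (Sum.inl s) (Sum.inl t))) := by
    apply Matrix.ext
    intro s t
    rcases eq_or_ne s t with h | h
    · subst h
      rw [Matrix.charmatrix_apply_eq]
      simp [hBp, Matrix.toBlocks₁₁, add_comm]
    · rw [Matrix.charmatrix_apply_ne _ _ _ h]
      simp [hBp, Matrix.toBlocks₁₁, h]
  have hmonic : Bp.toBlocks₁₁.det.Monic := by
    rw [hKp]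
    exact Matrix.charpoly_monic _
  have hKF : (φ.mapMatrix Bp).toBlocks₁₁.det ≠ 0 := by
    rw [toBlocks₁₁_map, ← RingHom.map_det]
    exact fun h => hmonic.ne_zero (hinj (h.trans (map_zero φ).symm))
  have h := sylv_field hm (φ.mapMatrix Bp) hKF
  rw [lhs_map, rhs_map] at h
  have hR := hinj h
  have h0 := congrArg (Polynomial.evalRingHom (0 : ℝ)) hR
  rw [← lhs_map (Polynomial.evalRingHom (0 : ℝ)) Bp,
    ← rhs_map (Polynomial.evalRingHom (0 : ℝ)) Bp] at h0
  have hev : (Polynomial.evalRingHom (0 : ℝ)).mapMatrix Bp = B := by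
    ext i j
    rcases eq_or_ne i j with h | h <;>
      simp [hBp, h, Polynomial.eval_add, Polynomial.eval_C, Polynomial.eval_X]
  rwa [hev] at h0

/-- The Sylvester-type identity \eqref{id} for generalized divided differences:
`Φ_ω(x₁,…,x_n) · (Φ_{ω⟨k⟩}(x₁,…,x_k))^{n-k-1} / ∏_{j=k+1}^n Φ_{ω⟨k+1⟩}(x₁,…,x_k,x_j)`
equals the determinant of the matrix with entries `[x₁,…,x_k,x_j; ω_i]_{ω⟨k+1⟩}`
for `i, j ∈ {k+1,…,n}`. -/
theorem sylvester_divided_difference_identity (n k : ℕ) (hk : k < n) (H : Set ℝ)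
    (hH : n ≤ H.ncard ∨ H.Infinite)
    (ω : Fin n → ℝ → ℝ)
    (hωk1 : ∀ y : Fin (k + 1) → ℝ, (∀ i, y i ∈ H) → Function.Injective y →
      Phi (fun i : Fin (k + 1) => ω (Fin.castLE hk i)) y ≠ 0)
    (x : Fin n → ℝ) (hxH : ∀ i, x i ∈ H) (hinj : Function.Injective x) :
    Phi ω x *
        (Phi (fun i : Fin k => ω (Fin.castLE (by omega) i))
          (fun i : Fin k => x (Fin.castLE (by omega) i))) ^ (n - k - 1) /
      ∏ j : Fin (n - k),
        Phi (fun i : Fin (k + 1) => ω (Fin.castLE hk i))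
          (Fin.snoc (fun i : Fin k => x (Fin.castLE (by omega) i))
            (x ⟨k + (j : ℕ), by have := j.isLt; omega⟩))
    = Matrix.det (Matrix.of fun i j : Fin (n - k) =>
        divDiff (fun t : Fin (k + 1) => ω (Fin.castLE hk t))
          (ω ⟨k + (i : ℕ), by have := i.isLt; omega⟩)
          (Fin.snoc (fun t : Fin k => x (Fin.castLE (by omega) t))
            (x ⟨k + (j : ℕ), by have := j.isLt; omega⟩))) := by
  have hm : 0 < n - k := by omega
  have hnk : k + (n - k) = n := by omega
  set e : Fin k ⊕ Fin (n - k) ≃ Fin n := finSumFinEquiv.trans (finCongr hnk) with he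
  set A : Matrix (Fin n) (Fin n) ℝ := Matrix.of fun i j => ω i (x j) with hA
  set B : Matrix (Fin k ⊕ Fin (n - k)) (Fin k ⊕ Fin (n - k)) ℝ := A.submatrix e e with hB
  have he1 : ∀ s : Fin k, (e (Sum.inl s) : Fin n) = Fin.castLE hk.le s := by
    intro s; apply Fin.ext; simp [he]
  have he2 : ∀ j : Fin (n - k), (e (Sum.inr j) : Fin n) = ⟨k + (j : ℕ), by omega⟩ := by
    intro j; apply Fin.ext; simp [he]
  have hf1 : ∀ t : Fin k, (finSumFinEquiv (Sum.inl t) : Fin (k + 1)) = Fin.castSucc t := by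
    intro t; apply Fin.ext; simp
  have hf2 : (finSumFinEquiv (Sum.inr (0 : Fin 1)) : Fin (k + 1)) = Fin.last k := by
    apply Fin.ext; simp
  -- step 1 : the full determinant
  have h1 : Phi ω x = B.det := by
    rw [hB, Matrix.det_submatrix_equiv_self]; rfl
  -- step 2 : the top-left `k × k` determinant
  have h2 : Phi (fun i : Fin k => ω (Fin.castLE hk.le i))
      (fun i : Fin k => x (Fin.castLE hk.le i)) = B.toBlocks₁₁.det := by
    rw [Phi]
    congr 1
    all_goals
      apply Matrix.ext
      intro s t
      simp only [Matrix.of_apply, Matrix.toBlocks₁₁, hB, Matrix.submatrix_apply, he1, hA]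
  -- step 3 : the numerators are the bordered determinants
  have h3 : ∀ i j : Fin (n - k),
      Phi (fun t : Fin (k + 1) =>
          if (t : ℕ) + 1 = k + 1 then ω ⟨k + (i : ℕ), by omega⟩ else ω (Fin.castLE hk t))
        (Fin.snoc (fun t : Fin k => x (Fin.castLE hk.le t)) (x ⟨k + (j : ℕ), by omega⟩))
      = (brd B i j).det := by
    intro i j
    rw [Phi, ← Matrix.det_submatrix_equiv_self (finSumFinEquiv : Fin k ⊕ Fin 1 ≃ Fin (k + 1))]
    congr 1
    apply Matrix.ext
    rintro (s | s) (t | t) <;>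
      simp only [Matrix.submatrix_apply, Matrix.of_apply, hf1, hf2, Fin.fin_one_eq_zero,
        Fin.snoc_castSucc, Fin.snoc_last, Fin.coe_castSucc, Fin.val_last, brd,
        Matrix.fromBlocks_apply₁₁, Matrix.fromBlocks_apply₁₂, Matrix.fromBlocks_apply₂₁,
        Matrix.fromBlocks_apply₂₂, Matrix.toBlocks₁₁, hB, hA, he1, he2]
    · rw [if_neg (show ¬((s : ℕ) + 1 = k + 1) by omega)]
      congr 1 <;> first | rfl | exact Fin.ext rfl | exact congrArg ω (Fin.ext rfl)
    · rw [if_neg (show ¬((s : ℕ) + 1 = k + 1) by omega)]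
      congr 1 <;> first | rfl | exact Fin.ext rfl | exact congrArg ω (Fin.ext rfl)
    · first | rw [if_pos trivial] | rw [if_pos rfl]
    · first | rw [if_pos trivial] | rw [if_pos rfl]
  -- the denominators
  set d : Fin (n - k) → ℝ := fun j =>
    Phi (fun i : Fin (k + 1) => ω (Fin.castLE hk i))
      (Fin.snoc (fun i : Fin k => x (Fin.castLE hk.le i)) (x ⟨k + (j : ℕ), by omega⟩)) with hd
  have hRHS : (Matrix.of fun i j : Fin (n - k) =>
      divDiff (fun t : Fin (k + 1) => ω (Fin.castLE hk t))
        (ω ⟨k + (i : ℕ), by omega⟩)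
        (Fin.snoc (fun t : Fin k => x (Fin.castLE hk.le t)) (x ⟨k + (j : ℕ), by omega⟩)))
      = Matrix.of fun i j : Fin (n - k) => (d j)⁻¹ * (brd B i j).det := by
    apply Matrix.ext
    intro i j
    simp only [Matrix.of_apply, divDiff]
    rw [← h3 i j, div_eq_inv_mul]
  calc Phi ω x *
        (Phi (fun i : Fin k => ω (Fin.castLE hk.le i))
          (fun i : Fin k => x (Fin.castLE hk.le i))) ^ (n - k - 1) / ∏ j : Fin (n - k), d j
      = (B.det * B.toBlocks₁₁.det ^ (n - k - 1)) * (∏ j : Fin (n - k), d j)⁻¹ := by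
        rw [h1, h2, div_eq_mul_inv]
    _ = (∏ j : Fin (n - k), (d j)⁻¹) *
          (Matrix.of fun i j : Fin (n - k) => (brd B i j).det).det := by
        rw [sylv hm B, Finset.prod_inv_distrib]
        ring
    _ = Matrix.det (Matrix.of fun i j : Fin (n - k) => (d j)⁻¹ * (brd B i j).det) := by
        exact (Matrix.det_mul_row (fun j => (d j)⁻¹)
          (Matrix.of fun i j : Fin (n - k) => (brd B i j).det)).symm
    _ = _ := by rw [← hRHS]
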